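/- In ℝ³ with coordinates (t,x,y), let K = {(x,y) ∈ ℝ² : x ≥ |y|} and M' = ℝ × (ℝ² ∖ K), an open subset of ℝ³. Let C' = {v = (v_t, v_x, v_y) ∈ ℝ³, v ≠ 0 : −v_t² − v_x² + v_y² ≤ 0, v_x ≥ 0, v_t ≥ 0}, and define the relation ≤ on M' by: p ≤ q iff p = q or there is a Lipschitz curve γ : [0,1] → ℝ³ with image contained in M', γ(0) = p, γ(1) = q, whose derivative lies in C' ∪ {0} almost everywhere. Then for p = (−2,−1,1) and q = (2,1,−2), the causal diamond {z ∈ M' : p ≤ z and z ≤ q} is nonempty but NOT compact; in particular, the point (0,0,0) is a limit of points of the diamond but does not belong to M'. -/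

import Mathlib

open MeasureTheory

/-- `M' = ℝ × (ℝ² ∖ K)` where `K = {(x,y) : x ≥ |y|}` is the causal future of the
origin in `ℝ^{1,1}`; a point `(t,x,y)` lies in `M'` iff `x < |y|`. -/
def exM : Set (ℝ × ℝ × ℝ) := {p | p.2.1 < |p.2.2|}

/-- The future causal cone `C'` of the orthogonally extended `(1,2)`-spacetime
`(ℝ × M, −dt² ⊕ η)`, `η = −dx² + dy²`, with frame `X₁ = ∂ₓ`, `X₂ = ∂ₜ`:
nonzero `v` with `−v_t² − v_x² + v_y² ≤ 0`, `v_x ≥ 0`, `v_t ≥ 0`. -/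
def exCone : Set (ℝ × ℝ × ℝ) :=
  {v | v ≠ 0 ∧ -v.1 ^ 2 - v.2.1 ^ 2 + v.2.2 ^ 2 ≤ 0 ∧ 0 ≤ v.2.1 ∧ 0 ≤ v.1}

/-- The causal relation of `M'`: `p ≤ q` iff `p = q` or there is a Lipschitz
curve from `p` to `q`, staying in `M'`, whose a.e. derivative lies in
`C' ∪ {0}`. -/
def exCausalLE (p q : ℝ × ℝ × ℝ) : Prop :=
  p = q ∨ ∃ (K : NNReal) (γ : ℝ → ℝ × ℝ × ℝ),
    LipschitzWith K γ ∧ γ 0 = p ∧ γ 1 = q ∧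
    (∀ s ∈ Set.Icc (0 : ℝ) 1, γ s ∈ exM) ∧
    ∀ᵐ s ∂(volume : Measure ℝ), s ∈ Set.Icc (0 : ℝ) 1 →
      ∃ v, HasDerivAt γ v s ∧ (v = 0 ∨ v ∈ exCone)

/-- clamp to `[0,1]` -/
noncomputable def exClamp (s : ℝ) : ℝ := min (max s 0) 1

lemma exClamp_eq {s : ℝ} (h0 : 0 ≤ s) (h1 : s ≤ 1) : exClamp s = s := by
  simp [exClamp, max_eq_left h0, min_eq_left h1]

lemma exClamp_mem (s : ℝ) : 0 ≤ exClamp s ∧ exClamp s ≤ 1 := by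
  exact ⟨le_min (le_max_right _ _) zero_le_one, min_le_right _ _⟩

lemma exClamp_abs_sub (s t : ℝ) : |exClamp s - exClamp t| ≤ |s - t| := by
  unfold exClamp
  refine (abs_min_sub_min_le_max _ _ _ _).trans ?_
  simp only [sub_self, abs_zero]
  exact max_le (abs_max_sub_max_le_abs s t 0) (abs_nonneg _)

lemma exClamp_ae_eventuallyEq {s : ℝ} (h0 : 0 < s) (h1 : s < 1) :
    (fun t => exClamp t) =ᶠ[nhds s] fun t => t := by
  filter_upwards [isOpen_Ioo.mem_nhds (show s ∈ Set.Ioo (0:ℝ) 1 from ⟨h0, h1⟩)] with t ht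
  exact exClamp_eq ht.1.le ht.2.le

lemma ae_ne_endpoints : ∀ᵐ s ∂(volume : Measure ℝ), s ≠ 0 ∧ s ≠ 1 := by
  have h0 : ∀ᵐ s ∂(volume : Measure ℝ), s ≠ (0:ℝ) := by
    rw [ae_iff]; simpa using measure_singleton (0:ℝ)
  have h1 : ∀ᵐ s ∂(volume : Measure ℝ), s ≠ (1:ℝ) := by
    rw [ae_iff]; simpa using measure_singleton (1:ℝ)
  filter_upwards [h0, h1] with s hs0 hs1; exact ⟨hs0, hs1⟩

/-- the curve from `p` to `(0,-ε,0)` -/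
lemma causal_left {ε : ℝ} (hε : 0 < ε) (hε1 : ε ≤ 1) :
    exCausalLE ((-2 : ℝ), (-1 : ℝ), (1 : ℝ)) ((0 : ℝ), (-ε : ℝ), (0 : ℝ)) := by
  right
  refine ⟨2, fun s => (-2 + 2 * exClamp s, (-1 + (1 - ε) * exClamp s, 1 - exClamp s)),
    ?_, ?_, ?_, ?_, ?_⟩
  · apply LipschitzWith.of_dist_le_mul
    intro s t
    have hc := exClamp_abs_sub s t
    rw [Prod.dist_eq, Prod.dist_eq]
    simp only [Real.dist_eq]
    have e1 : -2 + 2 * exClamp s - (-2 + 2 * exClamp t) = 2 * (exClamp s - exClamp t) := by ring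
    have e2 : -1 + (1 - ε) * exClamp s - (-1 + (1 - ε) * exClamp t)
        = (1 - ε) * (exClamp s - exClamp t) := by ring
    have e3 : 1 - exClamp s - (1 - exClamp t) = -(exClamp s - exClamp t) := by ring
    rw [e1, e2, e3, abs_mul, abs_mul, abs_neg]
    have hb : |(1 - ε)| ≤ 2 := by rw [abs_le]; constructor <;> linarith
    have h2 : |(2:ℝ)| = 2 := by norm_num
    push_cast
    refine max_le ?_ (max_le ?_ ?_) <;>
      nlinarith [abs_nonneg (exClamp s - exClamp t), abs_nonneg (s - t)]
  · have h : exClamp 0 = 0 := exClamp_eq le_rfl zero_le_one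
    simp only [h, Prod.mk.injEq]
    refine ⟨by ring, by ring, by ring⟩
  · have h : exClamp 1 = 1 := exClamp_eq zero_le_one le_rfl
    simp only [h, Prod.mk.injEq]
    refine ⟨by ring, by ring, by ring⟩
  · intro s hs
    rw [Set.mem_Icc] at hs
    simp only [exM, Set.mem_setOf_eq, exClamp_eq hs.1 hs.2]
    have hy : |1 - s| = 1 - s := abs_of_nonneg (by linarith [hs.2])
    rw [hy]
    rcases lt_or_ge s 1 with h | h
    · nlinarith [hs.1]
    · have hseq : s = 1 := le_antisymm hs.2 h
      rw [hseq]; linarith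
  · filter_upwards [ae_ne_endpoints] with s hs hmem
    rw [Set.mem_Icc] at hmem
    have h0 : 0 < s := lt_of_le_of_ne hmem.1 (Ne.symm hs.1)
    have h1 : s < 1 := lt_of_le_of_ne hmem.2 hs.2
    refine ⟨(2, (1 - ε, -1)), ?_, Or.inr ?_⟩
    · have hd : HasDerivAt (fun t : ℝ => (-2 + 2 * t, (-1 + (1 - ε) * t, 1 - t)))
          (2, (1 - ε, -1)) s := by
        apply HasDerivAt.prodMk
        · simpa using ((hasDerivAt_id s).const_mul 2).const_add (-2)
        apply HasDerivAt.prodMk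
        · simpa using ((hasDerivAt_id s).const_mul (1 - ε)).const_add (-1)
        · simpa using (hasDerivAt_id s).const_sub 1
      apply hd.congr_of_eventuallyEq
      filter_upwards [exClamp_ae_eventuallyEq h0 h1] with t ht
      simp [ht]
    · refine ⟨?_, ?_, ?_, by norm_num⟩
      · simp [Prod.ext_iff]
      · show -(2:ℝ) ^ 2 - (1 - ε) ^ 2 + (-1) ^ 2 ≤ 0
        nlinarith
      · show (0:ℝ) ≤ 1 - ε
        linarith

/-- the curve from `(0,-ε,0)` to `q` -/
lemma causal_right {ε : ℝ} (hε : 0 < ε) (hε1 : ε ≤ 1) :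
    exCausalLE ((0 : ℝ), (-ε : ℝ), (0 : ℝ)) ((2 : ℝ), (1 : ℝ), (-2 : ℝ)) := by
  right
  refine ⟨4, fun s => (2 * exClamp s, (-ε + (1 + ε) * (exClamp s) ^ 2, -(2 * exClamp s))),
    ?_, ?_, ?_, ?_, ?_⟩
  · apply LipschitzWith.of_dist_le_mul
    intro s t
    have hc := exClamp_abs_sub s t
    have hms := exClamp_mem s
    have hmt := exClamp_mem t
    rw [Prod.dist_eq, Prod.dist_eq]
    simp only [Real.dist_eq]
    have e1 : 2 * exClamp s - 2 * exClamp t = 2 * (exClamp s - exClamp t) := by ring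
    have e2 : -ε + (1 + ε) * (exClamp s) ^ 2 - (-ε + (1 + ε) * (exClamp t) ^ 2)
        = ((1 + ε) * (exClamp s + exClamp t)) * (exClamp s - exClamp t) := by ring
    have e3 : -(2 * exClamp s) - -(2 * exClamp t) = -(2 * (exClamp s - exClamp t)) := by ring
    rw [e1, e2, e3]
    have h2 : |(2:ℝ)| = 2 := by norm_num
    have hb : |(1 + ε) * (exClamp s + exClamp t)| ≤ 4 := by
      rw [abs_mul, abs_of_nonneg (by linarith : (0:ℝ) ≤ 1 + ε),
        abs_of_nonneg (by linarith [hms.1, hmt.1] : (0:ℝ) ≤ exClamp s + exClamp t)]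
      nlinarith [hms.2, hmt.2]
    push_cast
    refine max_le ?_ (max_le ?_ ?_)
    · rw [abs_mul, h2]
      nlinarith [abs_nonneg (s - t)]
    · rw [abs_mul]
      nlinarith [abs_nonneg (exClamp s - exClamp t), abs_nonneg (s - t),
        abs_nonneg ((1 + ε) * (exClamp s + exClamp t))]
    · rw [abs_neg, abs_mul, h2]
      nlinarith [abs_nonneg (s - t)]
  · have h : exClamp 0 = 0 := exClamp_eq le_rfl zero_le_one
    simp only [h, Prod.mk.injEq]
    refine ⟨by ring, by ring, by ring⟩
  · have h : exClamp 1 = 1 := exClamp_eq zero_le_one le_rfl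
    simp only [h, Prod.mk.injEq]
    refine ⟨by ring, by ring, by ring⟩
  · intro s hs
    rw [Set.mem_Icc] at hs
    simp only [exM, Set.mem_setOf_eq, exClamp_eq hs.1 hs.2]
    have hy : |(-(2 * s))| = 2 * s := by
      rw [abs_neg, abs_mul]; simp [abs_of_nonneg hs.1]
    rw [hy]
    rcases eq_or_lt_of_le hs.1 with h | h
    · rw [← h]; simpa using hε
    · nlinarith [hs.2]
  · filter_upwards [ae_ne_endpoints] with s hs hmem
    rw [Set.mem_Icc] at hmem
    have h0 : 0 < s := lt_of_le_of_ne hmem.1 (Ne.symm hs.1)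
    have h1 : s < 1 := lt_of_le_of_ne hmem.2 hs.2
    refine ⟨(2, ((1 + ε) * (2 * s), -2)), ?_, Or.inr ?_⟩
    · have hd : HasDerivAt (fun t : ℝ => (2 * t, (-ε + (1 + ε) * t ^ 2, -(2 * t))))
          (2, ((1 + ε) * (2 * s), -2)) s := by
        apply HasDerivAt.prodMk
        · simpa using (hasDerivAt_id s).const_mul 2
        apply HasDerivAt.prodMk
        · have h := ((hasDerivAt_pow 2 s).const_mul (1 + ε)).const_add (-ε)
          simpa [mul_comm] using h
        · convert ((hasDerivAt_id s).const_mul 2).neg using 1 <;> simp [funext_iff]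
      apply hd.congr_of_eventuallyEq
      filter_upwards [exClamp_ae_eventuallyEq h0 h1] with t ht
      simp [ht]
    · refine ⟨?_, ?_, ?_, by norm_num⟩
      · simp [Prod.ext_iff]
      · show -(2:ℝ) ^ 2 - ((1 + ε) * (2 * s)) ^ 2 + (-2) ^ 2 ≤ 0
        nlinarith [sq_nonneg ((1 + ε) * (2 * s))]
      · show (0:ℝ) ≤ (1 + ε) * (2 * s)
        positivity

lemma mem_diamond {ε : ℝ} (hε : 0 < ε) (hε1 : ε ≤ 1) :
    ((0 : ℝ), (-ε : ℝ), (0 : ℝ)) ∈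
      ({z | z ∈ exM ∧ exCausalLE ((-2 : ℝ), (-1 : ℝ), (1 : ℝ)) z ∧
        exCausalLE z ((2 : ℝ), (1 : ℝ), (-2 : ℝ))} : Set (ℝ × ℝ × ℝ)) := by
  refine ⟨?_, causal_left hε hε1, causal_right hε hε1⟩
  simp only [exM, Set.mem_setOf_eq]
  simpa using hε

/-- Example 5.24: for `p = (−2,−1,1)` and `q = (2,1,−2)`, the causal diamond
`J⁺(p) ∩ J⁻(q)` in `M'` is nonempty but not compact; in particular the origin
`(0,0,0)` is a limit point of the diamond which does not belong to `M'`. Hence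
global hyperbolicity of a `(n−ν,ν)`-spacetime does not pass to its orthogonal
extension when `ν < n`. -/
theorem orthogonal_extension_not_globally_hyperbolic :
    (({z | z ∈ exM ∧ exCausalLE ((-2 : ℝ), (-1 : ℝ), (1 : ℝ)) z ∧
        exCausalLE z ((2 : ℝ), (1 : ℝ), (-2 : ℝ))} : Set (ℝ × ℝ × ℝ)).Nonempty) ∧
    ¬ IsCompact ({z | z ∈ exM ∧ exCausalLE ((-2 : ℝ), (-1 : ℝ), (1 : ℝ)) z ∧
        exCausalLE z ((2 : ℝ), (1 : ℝ), (-2 : ℝ))} : Set (ℝ × ℝ × ℝ)) ∧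
    ((0 : ℝ), (0 : ℝ), (0 : ℝ)) ∈
      closure {z | z ∈ exM ∧ exCausalLE ((-2 : ℝ), (-1 : ℝ), (1 : ℝ)) z ∧
        exCausalLE z ((2 : ℝ), (1 : ℝ), (-2 : ℝ))} ∧
    ((0 : ℝ), (0 : ℝ), (0 : ℝ)) ∉ exM := by
  have hne : (({z | z ∈ exM ∧ exCausalLE ((-2 : ℝ), (-1 : ℝ), (1 : ℝ)) z ∧
      exCausalLE z ((2 : ℝ), (1 : ℝ), (-2 : ℝ))} : Set (ℝ × ℝ × ℝ)).Nonempty) :=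
    ⟨_, mem_diamond one_pos le_rfl⟩
  have hnotM : ((0 : ℝ), (0 : ℝ), (0 : ℝ)) ∉ exM := by
    simp [exM]
  have hT : Filter.Tendsto (fun n : ℕ => (((0:ℝ), (-(1 / (n + 1)) : ℝ), (0:ℝ)) : ℝ × ℝ × ℝ))
      Filter.atTop (nhds (((0:ℝ), (0:ℝ), (0:ℝ)) : ℝ × ℝ × ℝ)) := by
    have h1 : Filter.Tendsto (fun n : ℕ => (-(1 / (n + 1)) : ℝ)) Filter.atTop (nhds 0) := by
      simpa using (tendsto_one_div_add_atTop_nhds_zero_nat (𝕜 := ℝ)).neg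
    have h0 : Filter.Tendsto (fun _ : ℕ => (0:ℝ)) Filter.atTop (nhds (0:ℝ)) :=
      tendsto_const_nhds
    exact h0.prodMk_nhds (h1.prodMk_nhds h0)
  have hev : ∀ᶠ n : ℕ in Filter.atTop,
      (((0:ℝ), (-(1 / (n + 1)) : ℝ), (0:ℝ)) : ℝ × ℝ × ℝ) ∈
      ({z | z ∈ exM ∧ exCausalLE ((-2 : ℝ), (-1 : ℝ), (1 : ℝ)) z ∧
        exCausalLE z ((2 : ℝ), (1 : ℝ), (-2 : ℝ))} : Set (ℝ × ℝ × ℝ)) := by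
    filter_upwards with n
    have hp : (0:ℝ) < 1 / (n + 1) := by positivity
    have hp1 : (1 / (n + 1) : ℝ) ≤ 1 := by
      rw [div_le_one (by positivity)]
      linarith [Nat.cast_nonneg (α := ℝ) n]
    exact mem_diamond hp hp1
  have hcl : ((0 : ℝ), (0 : ℝ), (0 : ℝ)) ∈
      closure {z | z ∈ exM ∧ exCausalLE ((-2 : ℝ), (-1 : ℝ), (1 : ℝ)) z ∧
        exCausalLE z ((2 : ℝ), (1 : ℝ), (-2 : ℝ))} :=
    mem_closure_of_tendsto hT hev
  refine ⟨hne, ?_, hcl, hnotM⟩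
  intro hcomp
  have hcleq := hcomp.isClosed.closure_eq
  rw [hcleq] at hcl
  exact hnotM hcl.1
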